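/- Let f be a one-variable formal power series over ℝ with finite order d ∈ ℕ, and let n ≥ 1. Then there exists a power series g over ℝ with g^n = f if and only if there exists a power series r over ℝ with r^n = f_d·x^d, where f_d is the coefficient of x^d in f (the first nonzero coefficient of f). -/

import Mathlib

open PowerSeries

private lemma mem_span_X_pow {n : ℕ} {φ : PowerSeries ℝ} :
    φ ∈ (Ideal.span {(X : PowerSeries ℝ)}) ^ n ↔ ∀ m < n, coeff m φ = 0 := by
  rw [Ideal.span_singleton_pow, Ideal.mem_span_singleton, X_pow_dvd_iff]

private instance adic : IsAdicComplete (Ideal.span {(X : PowerSeries ℝ)}) (PowerSeries ℝ) where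
  haus' x hx := by
    simp only [← Ideal.one_eq_top, smul_eq_mul, mul_one, SModEq.sub_mem, sub_zero,
      mem_span_X_pow] at hx
    ext m
    simpa using hx (m + 1) m (Nat.lt_succ_self m)
  prec' f hf := by
    simp only [← Ideal.one_eq_top, smul_eq_mul, mul_one, SModEq.sub_mem, mem_span_X_pow] at hf ⊢
    refine ⟨PowerSeries.mk fun k => coeff k (f (k + 1)), fun n k hk => ?_⟩
    have h2 := hf (show k + 1 ≤ n from hk) k (Nat.lt_succ_self k)
    rw [map_sub] at h2 ⊢
    rw [coeff_mk]
    linarith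

private lemma exists_nth_root_of_unit {u : PowerSeries ℝ} {c : ℝ} {n : ℕ} (hn : 1 ≤ n)
    (hc : c ≠ 0) (hu : constantCoeff u = c ^ n) :
    ∃ w : PowerSeries ℝ, w ^ n = u := by
  have hH : HenselianRing (PowerSeries ℝ) (Ideal.span {(X : PowerSeries ℝ)}) := inferInstance
  set P : Polynomial (PowerSeries ℝ) := Polynomial.X ^ n - Polynomial.C u with hP
  have hmonic : P.Monic := Polynomial.monic_X_pow_sub_C u (by omega)
  have h1 : P.eval (C c) ∈ Ideal.span {(X : PowerSeries ℝ)} := by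
    rw [Ideal.mem_span_singleton, X_dvd_iff]
    simp [hP, hu]
  have h2 : IsUnit (Ideal.Quotient.mk (Ideal.span {(X : PowerSeries ℝ)})
      (P.derivative.eval (C c))) := by
    apply IsUnit.map
    rw [isUnit_iff_constantCoeff]
    simp only [hP, Polynomial.derivative_sub, Polynomial.derivative_X_pow,
      Polynomial.derivative_C, sub_zero, Polynomial.eval_mul, Polynomial.eval_pow,
      Polynomial.eval_natCast, Polynomial.eval_X, map_mul, map_pow, map_natCast,
      PowerSeries.constantCoeff_C]
    rw [isUnit_iff_ne_zero]
    have hn' : (n:ℝ) ≠ 0 := Nat.cast_ne_zero.mpr (by omega)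
    exact mul_ne_zero hn' (pow_ne_zero _ hc)
  obtain ⟨a, ha, -⟩ := hH.is_henselian P hmonic (C c) h1 h2
  refine ⟨a, ?_⟩
  have := ha
  simp only [Polynomial.IsRoot, hP, Polynomial.eval_sub, Polynomial.eval_pow,
    Polynomial.eval_X, Polynomial.eval_C, sub_eq_zero] at this
  exact this

private lemma order_pow' (g : PowerSeries ℝ) (n : ℕ) :
    (g ^ n).order = (n : ℕ∞) * g.order := by
  induction n with
  | zero => simp [order_one]
  | succ k ih =>
    rw [pow_succ, order_mul, ih]
    push_cast
    ring

private lemma factor {g : PowerSeries ℝ} {e : ℕ} (hg : g.order = (e : ℕ∞)) :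
    ∃ v, g = X ^ e * v ∧ constantCoeff v = coeff e g := by
  obtain ⟨v, hv⟩ := X_pow_dvd_iff.mpr
    (fun m hm => coeff_of_lt_order m (by rw [hg]; exact_mod_cast hm))
  refine ⟨v, hv, ?_⟩
  rw [hv]
  simpa using (coeff_X_pow_mul v e 0).symm

private lemma C_mul_X_pow_eq (a : ℝ) (d : ℕ) :
    C a * X ^ d = monomial d a := by
  ext k
  simp [coeff_C_mul_X_pow, coeff_monomial, coeff_X_pow, mul_ite, mul_one, mul_zero]

/-- A one-variable formal power series over `ℝ` of finite order `d` has an `n`-th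
root if and only if the monomial `f_d · x^d` (its initial term) has an `n`-th root. -/
theorem exists_nthRoot_iff_initial_term {f : PowerSeries ℝ} {d : ℕ}
    (hd : f.order = (d : ℕ∞)) {n : ℕ} (hn : 1 ≤ n) :
    (∃ g : PowerSeries ℝ, g ^ n = f) ↔
      (∃ r : PowerSeries ℝ, r ^ n = PowerSeries.monomial d (PowerSeries.coeff d f)) := by
  have hn0 : n ≠ 0 := by omega
  have hfne : f ≠ 0 := by
    rw [← order_finite_iff_ne_zero, hd]
    exact WithTop.coe_lt_top d
  have hfd : coeff d f ≠ 0 := (order_eq_nat.mp hd).1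
  constructor
  · rintro ⟨g, rfl⟩
    have hgne : g ≠ 0 := by
      rintro rfl
      rw [zero_pow hn0] at hfne
      exact hfne rfl
    have hog : (n : ℕ∞) * g.order = (d : ℕ∞) := by rw [← order_pow', hd]
    obtain ⟨e, he⟩ : ∃ e : ℕ, g.order = (e : ℕ∞) := by
      lift g.order to ℕ using (order_finite_iff_ne_zero.mpr hgne).ne_top with e he
      exact ⟨e, rfl⟩
    have hne : e * n = d := by
      have h := hog
      rw [he, mul_comm] at h
      exact_mod_cast h
    obtain ⟨v, hv, hv0⟩ := factor he
    have hvn : g ^ n = X ^ d * v ^ n := by rw [hv, mul_pow, ← pow_mul, hne]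
    have hcd : coeff d (g ^ n) = (coeff e g) ^ n := by
      rw [hvn, ← hv0]
      simpa [map_pow] using coeff_X_pow_mul (v ^ n) d 0
    refine ⟨C (coeff e g) * X ^ e, ?_⟩
    rw [mul_pow, ← map_pow, ← pow_mul, hne, ← hcd, C_mul_X_pow_eq]

  · rintro ⟨r, hr⟩
    have hmne : (monomial d) (coeff d f) ≠ 0 := fun h =>
      hfd (by simpa using congrArg (coeff d) h)
    have hrne : r ≠ 0 := by
      rintro rfl
      rw [zero_pow hn0] at hr
      exact hmne hr.symm
    have hor : (n : ℕ∞) * r.order = (d : ℕ∞) := by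
      rw [← order_pow', hr, order_monomial_of_ne_zero _ _ hfd]
    obtain ⟨e, he⟩ : ∃ e : ℕ, r.order = (e : ℕ∞) := by
      lift r.order to ℕ using (order_finite_iff_ne_zero.mpr hrne).ne_top with e he
      exact ⟨e, rfl⟩
    have hne : e * n = d := by
      have h := hor
      rw [he, mul_comm] at h
      exact_mod_cast h
    obtain ⟨w, hw, hw0⟩ := factor he
    have hXd : (X : PowerSeries ℝ) ^ d ≠ 0 := pow_ne_zero d X_ne_zero
    have hwn : w ^ n = C (coeff d f) := by
      apply mul_left_cancel₀ hXd
      calc X ^ d * w ^ n = (X ^ e * w) ^ n := by rw [mul_pow, ← pow_mul, hne]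
        _ = r ^ n := by rw [← hw]
        _ = monomial d (coeff d f) := hr
        _ = C (coeff d f) * X ^ d := (C_mul_X_pow_eq _ _).symm
        _ = X ^ d * C (coeff d f) := mul_comm _ _
    have hcn : (constantCoeff w) ^ n = coeff d f := by
      have := congrArg (constantCoeff) hwn
      simpa [map_pow] using this
    have hc : constantCoeff w ≠ 0 := fun h => hfd (by rw [← hcn, h, zero_pow hn0])
    obtain ⟨u, hu, hu0⟩ := factor hd
    obtain ⟨w', hw'⟩ := exists_nth_root_of_unit hn hc (by rw [hu0, ← hcn])
    refine ⟨X ^ e * w', ?_⟩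
    rw [mul_pow, ← pow_mul, hne, hw', ← hu]
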